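/- arXiv:2506.14088 — 2 statements merged into one kernel-verified Lean document; each statement's English description precedes it below -/
import Mathlib

section
/- Let G be a graph with an edge-coloring f : E → S. Then the following are equivalent: (1) for every cycle C of G and every color i, the number of edges of C with color i is not exactly 1; (2) for every color i and every edge e = {u,v} with f(e) = i, the vertices u and v lie in different connected components of the graph G with all edges of color i removed. -/
open SimpleGraph Walk

/-- For an edge-coloring `f` of a simple graph `G`, the following are equivalent:
(1) no cycle of `G` contains exactly one edge of any color;
(2) for every edge `e = {u,v}` of color `i`, the vertices `u` and `v` lie in different
connected components of `G` with all edges of color `i` deleted. -/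
theorem stmt3 {V S : Type*} [Fintype V] (G : SimpleGraph V) (f : Sym2 V → S) :
    (∀ (v : V) (C : G.Walk v v), C.IsCycle →
        ∀ i : S, ¬ ∃! e : Sym2 V, e ∈ C.edges ∧ f e = i) ↔
      (∀ (i : S) (u v : V), G.Adj u v → f s(u, v) = i →
        ¬ (G.deleteEdges {e : Sym2 V | f e = i}).Reachable u v) := by
  classical
  constructor
  · intro h1 i u v huv hf hr
    obtain ⟨w⟩ := hr.symm
    set G' := G.deleteEdges {e : Sym2 V | f e = i} with hG'
    obtain ⟨p, hp⟩ := w.toPath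
    have hcolor : ∀ e ∈ p.edges, f e ≠ i := by
      intro e he
      have := p.edges_subset_edgeSet he
      rw [hG', SimpleGraph.edgeSet_deleteEdges] at this
      exact this.2
    have hsub : ∀ e ∈ p.edges, e ∈ G.edgeSet := by
      intro e he
      have := p.edges_subset_edgeSet he
      rw [hG', SimpleGraph.edgeSet_deleteEdges] at this
      exact this.1
    let q : G.Walk v u := p.transfer G hsub
    have hq : q.IsPath := hp.transfer hsub
    have hqe : q.edges = p.edges := p.edges_transfer hsub
    have hnotmem : s(u, v) ∉ q.edges := by
      rw [hqe]
      intro hmem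
      exact hcolor _ hmem hf
    have hcyc : (Walk.cons huv q).IsCycle := by
      rw [Walk.cons_isCycle_iff]
      exact ⟨hq, hnotmem⟩
    refine h1 u (Walk.cons huv q) hcyc i ⟨s(u, v), ⟨?_, hf⟩, ?_⟩
    · simp [Walk.edges_cons]
    · rintro e ⟨he, hfe⟩
      rw [Walk.edges_cons, List.mem_cons] at he
      rcases he with h | h
      · exact h
      · exact absurd hfe (by rw [hqe] at h; exact hcolor _ h)
  · intro h2 v C hC i ⟨e, ⟨heC, hfe⟩, huniq⟩
    have heG : e ∈ G.edgeSet := C.edges_subset_edgeSet heC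
    induction e using Sym2.ind with
    | _ a b =>
    have hab : G.Adj a b := heG
    have haC : a ∈ C.support := C.fst_mem_support_of_mem_edges heC
    -- rotate the cycle so it starts at a
    set C₂ := C.rotate a haC with hC₂def
    have hC₂ : C₂.IsCycle := hC.rotate haC
    have hedges : s(a, b) ∈ C₂.edges := ((C.rotate_edges a haC).mem_iff).mpr heC
    have hC2sub : ∀ e' ∈ C₂.edges, e' ∈ C.edges := fun e' he' =>
      ((C.rotate_edges a haC).mem_iff).mp he'
    -- all edges of the cycle other than s(a,b) have color ≠ i
    have hother : ∀ e' ∈ C₂.edges, e' ≠ s(a, b) → f e' ≠ i := by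
      intro e' he' hne hcol
      exact hne (huniq e' ⟨hC2sub e' he', hcol⟩)
    apply h2 i a b hab hfe
    -- destructure the rotated cycle
    obtain ⟨x, h', q, hcons⟩ := Walk.not_nil_iff.mp hC₂.isCircuit.not_nil
    rw [hcons] at hC₂ hedges hother
    rw [Walk.cons_isCycle_iff] at hC₂
    obtain ⟨hqpath, hqnotmem⟩ := hC₂
    rw [Walk.edges_cons, List.mem_cons] at hedges
    rcases hedges with hfirst | hin
    · -- s(a,x) = s(a,b), so x = b; q : Walk b a avoids s(a,b)
      have hxb : x = b := by
        rcases Sym2.eq_iff.mp hfirst.symm with ⟨-, h⟩ | ⟨h1, h2⟩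
        · exact h
        · exact absurd h1 hab.ne
      subst hxb
      have hq' : ∀ e' ∈ q.edges, e' ∉ {e : Sym2 V | f e = i} := by
        intro e' he'
        simp only [Set.mem_setOf_eq]
        refine hother e' (by simp [he']) ?_
        rintro rfl
        exact hqnotmem he'
      exact ⟨(q.toDeleteEdges _ hq').reverse⟩
    · -- s(a,b) is in q; reverse q so it starts at a
      have hin' : s(a, b) ∈ q.reverse.edges := by rwa [Walk.edges_reverse, List.mem_reverse]
      have hqrpath : q.reverse.IsPath := hqpath.reverse
      cases hqr : q.reverse with
      | nil => exact absurd (hqr ▸ hin') (by simp)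
      | cons h'' r =>
        rename_i y
        rw [hqr] at hin' hqrpath
        rw [Walk.cons_isPath_iff] at hqrpath
        obtain ⟨hrpath, hanotin⟩ := hqrpath
        rw [Walk.edges_cons, List.mem_cons] at hin'
        have hyb : y = b ∧ s(a,b) ∉ r.edges := by
          rcases hin' with hfirst | hinr
          · constructor
            · rcases Sym2.eq_iff.mp hfirst.symm with ⟨-, h⟩ | ⟨h1, _⟩
              · exact h
              · exact absurd h1 hab.ne
            · intro hmem
              exact hanotin (r.fst_mem_support_of_mem_edges hmem)
          · exact absurd (r.fst_mem_support_of_mem_edges hinr) hanotin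
        obtain ⟨rfl, hrnot⟩ := hyb
        -- r : Walk b x, then edge x -> a gives walk b -> a
        have hrsub : ∀ e' ∈ r.edges, e' ∈ q.edges := by
          intro e' he'
          have : e' ∈ q.reverse.edges := by rw [hqr]; simp [he']
          rwa [Walk.edges_reverse, List.mem_reverse] at this
        have hne_first : s(x, a) ≠ s(a, y) := by
          intro hcontra
          apply hqnotmem
          rw [Sym2.eq_swap] at hcontra
          rw [hcontra]
          exact hin
        have hwalk : ∀ e' ∈ (r.concat h'.symm).edges, e' ∉ {e : Sym2 V | f e = i} := by
          intro e' he'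
          rw [Walk.edges_concat, List.concat_eq_append, List.mem_append,
            List.mem_singleton] at he'
          simp only [Set.mem_setOf_eq]
          rcases he' with hr | rfl
          · refine hother e' (by simp [hrsub e' hr]) ?_
            rintro rfl
            exact hrnot hr
          · refine hother s(x, a) (by rw [Sym2.eq_swap]; simp) hne_first
        exact ⟨((r.concat h'.symm).toDeleteEdges _ hwalk).reverse⟩
end

section
/- Let n, k, r be positive integers with gcd(n,k) = 1, k^r ≡ 1 (mod n), n ≥ 3, r ≥ 3. The generalized Petersen graph G(n,k) is isomorphic to the induced subgraph of the Cayley graph Cay(Cₙ ⋊ C_r, {a,b}) on the vertex set {b^i : 0 ≤ i ≤ n−1} ∪ {b^i·a : 0 ≤ i ≤ n−1}, where outer vertex u_i maps to b^i and inner vertex v_i maps to b^i·a. -/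
/-- The Cayley graph of a group `Γ` with connection set `S`. -/
def cayley {Γ : Type*} [Group Γ] (S : Set Γ) : SimpleGraph Γ where
  Adj x y := x ≠ y ∧ (x⁻¹ * y ∈ S ∨ y⁻¹ * x ∈ S)
  symm := by
    constructor
    rintro x y ⟨hxy, h⟩
    exact ⟨hxy.symm, h.symm⟩
  loopless := by constructor; rintro x ⟨hx, -⟩; exact hx rfl

/-- The group homomorphism `AddAut A →* MulAut (Multiplicative A)`. -/
def addAutToMulAut (A : Type*) [AddGroup A] :
    Multiplicative (AddAut A) →* MulAut (Multiplicative A) where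
  toFun e := AddEquiv.toMultiplicative e.toAdd
  map_one' := rfl
  map_mul' _ _ := rfl

/-- The action of `C_r` on `C_n` sending the generator of `C_r` to multiplication
by `k` on `C_n = ZMod n` (written additively), i.e. to `x ↦ x^k` multiplicatively.
This is well defined since `gcd(k,n) = 1` and `k^r ≡ 1 (mod n)`. -/
noncomputable def semiAct (n r k : ℕ) (h : Nat.Coprime k n) (hk : k ^ r ≡ 1 [MOD n]) :
    Multiplicative (ZMod r) →* MulAut (Multiplicative (ZMod n)) :=
  AddMonoidHom.toMultiplicativeLeft
    (ZMod.lift r ⟨zmultiplesHom _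
      (Additive.ofMul (addAutToMulAut (ZMod n) (AddAut.mulLeft (ZMod.unitOfCoprime k h)))), by
        have hu : (ZMod.unitOfCoprime k h) ^ r = 1 := by
          ext
          push_cast
          have : ((k : ZMod n)) ^ r = ((1 : ℕ) : ZMod n) := by
            rw [← Nat.cast_pow, ZMod.natCast_eq_natCast_iff]
            exact hk
          simpa using this
        simp only [zmultiplesHom_apply]
        rw [← ofMul_zpow, ← map_zpow, ← map_zpow]
        norm_cast
        rw [hu]
        simp ⟩)

/-- The semidirect product `C_n ⋊ C_r` where the generator `a` of `C_r` acts on the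
generator `b` of `C_n` by `a * b * a⁻¹ = b^k`. -/
noncomputable abbrev SDP (n r k : ℕ) (h : Nat.Coprime k n) (hk : k ^ r ≡ 1 [MOD n]) :=
  SemidirectProduct (Multiplicative (ZMod n)) (Multiplicative (ZMod r)) (semiAct n r k h hk)

/-- The generator `a` (of order `r`) of `C_n ⋊ C_r`. -/
noncomputable def genA (n r k : ℕ) (h : Nat.Coprime k n) (hk : k ^ r ≡ 1 [MOD n]) :
    SDP n r k h hk :=
  SemidirectProduct.inr (Multiplicative.ofAdd 1)

/-- The generator `b` (of order `n`) of `C_n ⋊ C_r`. -/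
noncomputable def genB (n r k : ℕ) (h : Nat.Coprime k n) (hk : k ^ r ≡ 1 [MOD n]) :
    SDP n r k h hk :=
  SemidirectProduct.inl (Multiplicative.ofAdd 1)

/-- The generalized Petersen graph `G(n,k)`: vertices `Sum.inl i` are the outer
vertices `uᵢ` and vertices `Sum.inr i` are the inner vertices `vᵢ` (indices mod `n`);
edges are `uᵢuᵢ₊₁`, `vᵢvᵢ₊ₖ` and the spokes `uᵢvᵢ`. -/
def GPG (n k : ℕ) : SimpleGraph (ZMod n ⊕ ZMod n) where
  Adj x y := x ≠ y ∧
    (match x, y with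
     | Sum.inl i, Sum.inl j => j = i + 1 ∨ i = j + 1
     | Sum.inr i, Sum.inr j => j = i + (k : ZMod n) ∨ i = j + (k : ZMod n)
     | Sum.inl i, Sum.inr j => i = j
     | Sum.inr i, Sum.inl j => i = j)
  symm := by
    constructor
    rintro (i | i) (j | j) ⟨hne, h⟩ <;>
      refine ⟨Ne.symm hne, ?_⟩ <;> dsimp only at h ⊢ <;> tauto
  loopless := by constructor; rintro x ⟨hx, -⟩; exact hx rfl

/-- The map sending the outer vertex `uᵢ` to `bⁱ` and the inner vertex `vᵢ` to `bⁱ * a`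
in `C_n ⋊ C_r`. -/
noncomputable def embMap (n r k : ℕ) (h : Nat.Coprime k n) (hk : k ^ r ≡ 1 [MOD n]) :
    ZMod n ⊕ ZMod n → SDP n r k h hk
  | Sum.inl i => genB n r k h hk ^ i.val
  | Sum.inr i => genB n r k h hk ^ i.val * genA n r k h hk
section AuxLemmas
variable (n r k : ℕ) (h : Nat.Coprime k n) (hk : k ^ r ≡ 1 [MOD n])

lemma semiAct_ofAdd_one :
    semiAct n r k h hk (Multiplicative.ofAdd 1) =
      addAutToMulAut (ZMod n) (AddAut.mulLeft (ZMod.unitOfCoprime k h)) := by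
  unfold semiAct
  simp only [AddMonoidHom.toMultiplicativeLeft_apply_apply, toAdd_ofAdd]
  have : ((1 : ℤ) : ZMod r) = 1 := by push_cast; rfl
  rw [← this, ZMod.lift_coe]
  simp

lemma semiAct_one_apply (x : ZMod n) :
    semiAct n r k h hk (Multiplicative.ofAdd 1) (Multiplicative.ofAdd x) =
      Multiplicative.ofAdd ((k : ZMod n) * x) := by
  rw [semiAct_ofAdd_one]
  rfl

lemma semiAct_neg_one_apply_eq (x y : ZMod n) :
    semiAct n r k h hk (Multiplicative.ofAdd (1 : ZMod r))⁻¹ (Multiplicative.ofAdd x) =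
      Multiplicative.ofAdd y ↔ x = (k : ZMod n) * y := by
  rw [map_inv, MulAut.inv_def, MulEquiv.symm_apply_eq, semiAct_one_apply]
  exact ⟨fun h' => by simpa using congrArg Multiplicative.toAdd h',
    fun h' => by rw [h']⟩

lemma genB_pow (m : ℕ) :
    genB n r k h hk ^ m = SemidirectProduct.inl (Multiplicative.ofAdd (m : ZMod n)) := by
  rw [genB, ← map_pow]
  congr 1
  rw [← ofAdd_nsmul]
  simp

lemma embMap_inl (i : ZMod n) [NeZero n] :
    embMap n r k h hk (Sum.inl i) = ⟨Multiplicative.ofAdd i, 1⟩ := by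
  show genB n r k h hk ^ i.val = _
  rw [genB_pow]
  ext <;>
    simp [SemidirectProduct.left_inl, SemidirectProduct.right_inl, ZMod.natCast_val,
      ZMod.cast_id]

lemma embMap_inr (i : ZMod n) [NeZero n] :
    embMap n r k h hk (Sum.inr i) = ⟨Multiplicative.ofAdd i, Multiplicative.ofAdd 1⟩ := by
  show genB n r k h hk ^ i.val * genA n r k h hk = _
  rw [genB_pow]
  ext <;>
    simp [genA, SemidirectProduct.mul_left, SemidirectProduct.mul_right,
      SemidirectProduct.left_inl, SemidirectProduct.right_inl, SemidirectProduct.left_inr,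
      SemidirectProduct.right_inr, ZMod.natCast_val, ZMod.cast_id]

lemma inv_mul_mk (l1 l2 : Multiplicative (ZMod n)) (t1 t2 : Multiplicative (ZMod r)) :
    (⟨l1, t1⟩ : SDP n r k h hk)⁻¹ * ⟨l2, t2⟩ =
      ⟨semiAct n r k h hk t1⁻¹ (l1⁻¹ * l2), t1⁻¹ * t2⟩ := by
  ext <;>
    simp [SemidirectProduct.mul_left, SemidirectProduct.mul_right,
      SemidirectProduct.inv_left, SemidirectProduct.inv_right, map_mul]

lemma mk_eq_genA (l : Multiplicative (ZMod n)) (t : Multiplicative (ZMod r)) :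
    (⟨l, t⟩ : SDP n r k h hk) = genA n r k h hk ↔ l = 1 ∧ t = Multiplicative.ofAdd 1 := by
  rw [genA, SemidirectProduct.ext_iff]
  rfl

lemma mk_eq_genB (l : Multiplicative (ZMod n)) (t : Multiplicative (ZMod r)) :
    (⟨l, t⟩ : SDP n r k h hk) = genB n r k h hk ↔ l = Multiplicative.ofAdd 1 ∧ t = 1 := by
  rw [genB, SemidirectProduct.ext_iff]
  rfl

end AuxLemmas
section Main
variable (n r k : ℕ) (h : Nat.Coprime k n) (hk : k ^ r ≡ 1 [MOD n])

lemma zmod_cast_ne (m : ℕ) (hm : m < r) (h0 : m ≠ 0) : (m : ZMod r) ≠ 0 := by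
  intro hc
  haveI : NeZero r := ⟨by omega⟩
  have := ZMod.val_cast_of_lt hm
  rw [hc, ZMod.val_zero] at this
  omega

lemma embMap_injective [NeZero n] (hr3 : 3 ≤ r) :
    Function.Injective (embMap n r k h hk) := by
  have h1 : (1 : ZMod r) ≠ 0 := by
    simpa using zmod_cast_ne r 1 (by omega) one_ne_zero
  rintro (i | i) (j | j) hij <;>
    simp only [embMap_inl, embMap_inr, SemidirectProduct.ext_iff] at hij
  · simpa using congrArg Multiplicative.toAdd hij.1
  · exact absurd (congrArg Multiplicative.toAdd hij.2) (by simpa using h1.symm)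
  · exact absurd (congrArg Multiplicative.toAdd hij.2) (by simpa using h1)
  · simpa using congrArg Multiplicative.toAdd hij.1

lemma adj_iff [NeZero n] (hr3 : 3 ≤ r) (x y : ZMod n ⊕ ZMod n) :
    (cayley {genA n r k h hk, genB n r k h hk}).Adj
      (embMap n r k h hk x) (embMap n r k h hk y) ↔ (GPG n k).Adj x y := by
  have h1 : (1 : ZMod r) ≠ 0 := by
    simpa using zmod_cast_ne r 1 (by omega) one_ne_zero
  have h2 : (-1 : ZMod r) ≠ 0 := fun hc => h1 (by linear_combination -hc)
  have h3 : (-1 : ZMod r) ≠ 1 := by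
    intro hc
    have : ((2 : ℕ) : ZMod r) = 0 := by push_cast; linear_combination -hc
    exact zmod_cast_ne r 2 (by omega) (by omega) this
  show (_ ≠ _ ∧ _) ↔ (_ ≠ _ ∧ _)
  apply and_congr ((embMap_injective n r k h hk hr3).ne_iff)
  rcases x with i | i <;> rcases y with j | j <;>
    simp only [embMap_inl, embMap_inr, inv_mul_mk, Set.mem_insert_iff, Set.mem_singleton_iff,
      mk_eq_genA, mk_eq_genB, inv_one, map_one, one_mul, mul_one, MulAut.one_apply]
  all_goals {
    have f1 : ((1 : Multiplicative (ZMod r)) = Multiplicative.ofAdd 1) ↔ False :=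
      iff_false_intro fun hc => h1 (by simpa using (congrArg Multiplicative.toAdd hc).symm)
    have f2 : ((Multiplicative.ofAdd (1 : ZMod r))⁻¹ = Multiplicative.ofAdd 1) ↔ False :=
      iff_false_intro fun hc => h3 (by simpa using congrArg Multiplicative.toAdd hc)
    have f3 : ((Multiplicative.ofAdd (1 : ZMod r))⁻¹ = 1) ↔ False :=
      iff_false_intro fun hc => h2 (by simpa using congrArg Multiplicative.toAdd hc)
    have f4 : ∀ x y : ZMod n,
        ((Multiplicative.ofAdd x)⁻¹ * Multiplicative.ofAdd y = Multiplicative.ofAdd 1) ↔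
          y = x + 1 := by
      intro x y
      constructor
      · intro hc
        have := congrArg Multiplicative.toAdd hc
        simp at this
        linear_combination this
      · rintro rfl
        have : -x + (x + 1) = 1 := by ring
        simpa [← ofAdd_neg, ← ofAdd_add] using congrArg Multiplicative.ofAdd this
    have f5 : ∀ x y : ZMod n,
        ((Multiplicative.ofAdd x)⁻¹ * Multiplicative.ofAdd y = 1) ↔ y = x := by
      intro x y
      constructor
      · intro hc
        have := congrArg Multiplicative.toAdd hc
        simp at this
        linear_combination this
      · rintro rfl; simp
    have f6 : ∀ x y : ZMod n,
        (semiAct n r k h hk (Multiplicative.ofAdd 1)⁻¹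
            ((Multiplicative.ofAdd x)⁻¹ * Multiplicative.ofAdd y) = Multiplicative.ofAdd 1) ↔
          y = x + (k : ZMod n) := by
      intro x y
      rw [show (Multiplicative.ofAdd x)⁻¹ * Multiplicative.ofAdd y
            = Multiplicative.ofAdd (-x + y) by rw [← ofAdd_neg, ← ofAdd_add],
        semiAct_neg_one_apply_eq]
      constructor <;> intro hc <;> linear_combination hc
    have f7 : ∀ x y : ZMod n,
        (semiAct n r k h hk (Multiplicative.ofAdd 1)⁻¹
            ((Multiplicative.ofAdd x)⁻¹ * Multiplicative.ofAdd y) = 1) ↔ y = x := by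
      intro x y
      rw [show (Multiplicative.ofAdd x)⁻¹ * Multiplicative.ofAdd y
            = Multiplicative.ofAdd (-x + y) by rw [← ofAdd_neg, ← ofAdd_add],
        show (1 : Multiplicative (ZMod n)) = Multiplicative.ofAdd 0 from rfl,
        semiAct_neg_one_apply_eq]
      constructor <;> intro hc <;> linear_combination hc
    simp only [f1, f2, f3, f4, f5, f6, f7, inv_mul_cancel, and_true, true_and, and_false,
      false_and, false_or, or_false, eq_self_iff_true]
    try tauto }

end Main

/-- For `gcd(n,k) = 1`, `k^r ≡ 1 (mod n)`, `n ≥ 3`, `r ≥ 3` and `0 < k < n/2`, the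
generalized Petersen graph `G(n,k)` is isomorphic to the induced subgraph of the Cayley
graph `Cay(C_n ⋊ C_r, {a,b})` on `{bⁱ : 0 ≤ i ≤ n−1} ∪ {bⁱa : 0 ≤ i ≤ n−1}`, via the
map sending `uᵢ` to `bⁱ` and `vᵢ` to `bⁱ * a`. -/
theorem stmt10 (n r k : ℕ) (hn : 3 ≤ n) (hr : 3 ≤ r) (hkpos : 0 < k) (hkn : 2 * k < n)
    (h : Nat.Coprime n k) (hk : k ^ r ≡ 1 [MOD n]) :
    ∃ e : GPG n k ≃g
        ((cayley {genA n r k h.symm hk, genB n r k h.symm hk}).induce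
          (Set.range (embMap n r k h.symm hk))),
      (∀ i : ZMod n, (e (Sum.inl i) : SDP n r k h.symm hk) = genB n r k h.symm hk ^ i.val) ∧
      (∀ i : ZMod n, (e (Sum.inr i) : SDP n r k h.symm hk) =
          genB n r k h.symm hk ^ i.val * genA n r k h.symm hk) := by
  haveI : NeZero n := ⟨by omega⟩
  refine ⟨⟨Equiv.ofInjective _ (embMap_injective n r k h.symm hk hr), ?_⟩,
    fun i => rfl, fun i => rfl⟩
  intro x y
  exact adj_iff n r k h.symm hk hr x y
end
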